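/- Let d > 0 and τ₀ ≥ 0, and consider G(λ) = λ + d - d·e^{-λτ₀} on ℂ. Then λ = 0 is a simple root of G, and every root λ = u + iv of G satisfies u ≤ 0. -/

import Mathlib

theorem stmt_3 (d τ₀ : ℝ) (hd : 0 < d) (hτ : 0 ≤ τ₀) :
    (fun lam : ℂ => lam + d - d * Complex.exp (-lam * τ₀)) 0 = 0 ∧
    deriv (fun lam : ℂ => lam + d - d * Complex.exp (-lam * τ₀)) 0 ≠ 0 ∧
    ∀ lam : ℂ, lam + d - d * Complex.exp (-lam * τ₀) = 0 → lam.re ≤ 0 := by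
  refine ⟨by simp, ?_, ?_⟩
  · have h1 : HasDerivAt (fun lam : ℂ => lam + d - d * Complex.exp (-lam * τ₀))
        (1 - d * ((-1 * τ₀) * Complex.exp (-(0:ℂ) * τ₀))) 0 := by
      have he : HasDerivAt (fun lam : ℂ => Complex.exp (-lam * τ₀))
          ((-1 * τ₀) * Complex.exp (-(0:ℂ) * τ₀)) 0 := by
        have h0 : HasDerivAt (fun lam : ℂ => -lam * τ₀) (-1 * τ₀) 0 := by
          simpa using ((hasDerivAt_id (0:ℂ)).neg.mul_const (τ₀:ℂ))
        simpa [mul_comm, Function.comp_def] using (Complex.hasDerivAt_exp (-(0:ℂ) * τ₀)).comp 0 h0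
      simpa [Pi.sub_def] using (((hasDerivAt_id (0:ℂ)).add_const (d:ℂ)).sub
        ((he.const_mul (d:ℂ))))
    rw [h1.deriv]
    simp only [neg_zero, zero_mul, Complex.exp_zero, mul_one]
    intro h
    have h2 := congrArg Complex.re h
    simp at h2
    nlinarith [mul_nonneg hd.le hτ]
  · intro lam hlam
    by_contra hu
    push_neg at hu
    have heq : lam + d = d * Complex.exp (-lam * τ₀) := by
      linear_combination hlam
    have habs := congrArg (‖·‖) heq
    rw [norm_mul, Complex.norm_exp] at habs
    have hre : (-lam * (τ₀:ℂ)).re = -lam.re * τ₀ := by simp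
    rw [hre] at habs
    have h1 : Real.exp (-lam.re * τ₀) ≤ 1 := by
      apply Real.exp_le_one_iff.mpr
      nlinarith
    have h2 : ‖lam + d‖ ≤ d := by
      rw [habs]
      simp only [Complex.norm_real, Real.norm_eq_abs]
      calc |d| * Real.exp (-lam.re * τ₀) ≤ |d| * 1 :=
            mul_le_mul_of_nonneg_left h1 (abs_nonneg d)
        _ = d := by rw [mul_one, abs_of_pos hd]
    have h3 : (lam + d).re ≤ ‖lam + d‖ := Complex.re_le_norm _
    simp at h3
    linarith
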